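/- arXiv:1907.01746 — 3 statements merged into one kernel-verified Lean document; each statement's English description precedes it below -/
import Mathlib

section
/- For α > 0, ω > 0 and t ≥ 0, (ω / Γ(α)) ∫_0^t (t-s)^{α-1} E_α(ω s^α) ds = E_α(ω t^α) - 1, where E_α(z) = ∑_{k=0}^∞ z^k / Γ(kα + 1) is the one-parameter Mittag-Leffler function; in particular this integral is ≤ (Γ(α)/ω) E_α(ω t^α). -/
set_option maxHeartbeats 1000000

open MeasureTheory Set intervalIntegral

/-- The one-parameter Mittag-Leffler function. -/
noncomputable def mittagLeffler (α z : ℝ) : ℝ :=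
  ∑' k : ℕ, z ^ k / Real.Gamma (k * α + 1)

lemma gamma_lower {y r : ℝ} (hy : 1 ≤ y) (hr : 0 < r) :
    Real.exp (-r) * r ^ (y - 1) ≤ Real.Gamma y := by
  have hy0 : (0:ℝ) < y := by linarith
  rw [Real.Gamma_eq_integral hy0]
  have h0 : Real.exp (-r) * r ^ (y - 1)
      = ∫ x in Ioi r, Real.exp (-x) * r ^ (y - 1) := by
    rw [MeasureTheory.integral_mul_const, integral_exp_neg_Ioi]
  have hint : IntegrableOn (fun x => Real.exp (-x) * x ^ (y - 1)) (Ioi r) volume :=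
    (Real.GammaIntegral_convergent hy0).mono_set (Ioi_subset_Ioi hr.le)
  have hexp : IntegrableOn (fun x => Real.exp (-x)) (Ioi r) volume := by
    simpa using exp_neg_integrableOn_Ioi r one_pos
  have hint2 : IntegrableOn (fun x => Real.exp (-x) * r ^ (y - 1)) (Ioi r) volume :=
    hexp.mul_const _
  have step1 : (∫ x in Ioi r, Real.exp (-x) * r ^ (y - 1))
      ≤ ∫ x in Ioi r, Real.exp (-x) * x ^ (y - 1) := by
    refine setIntegral_mono_on hint2 hint measurableSet_Ioi ?_
    intro x hx
    have : r ^ (y - 1) ≤ x ^ (y - 1) :=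
      Real.rpow_le_rpow hr.le (le_of_lt hx) (by linarith)
    exact mul_le_mul_of_nonneg_left this (Real.exp_nonneg _)
  have step2 : (∫ x in Ioi r, Real.exp (-x) * x ^ (y - 1))
      ≤ ∫ x in Ioi 0, Real.exp (-x) * x ^ (y - 1) := by
    refine setIntegral_mono_set (Real.GammaIntegral_convergent hy0) ?_
      (HasSubset.Subset.eventuallyLE (Ioi_subset_Ioi hr.le))
    filter_upwards [ae_restrict_mem measurableSet_Ioi] with x hx
    have hx' : (0:ℝ) < x := hx
    positivity
  rw [h0]; exact le_trans step1 step2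

lemma ml_summable {α x : ℝ} (hα : 0 < α) (hx : 0 ≤ x) :
    Summable (fun k : ℕ => x ^ k / Real.Gamma (k * α + 1)) := by
  set r := (2 * x + 1) ^ (1 / α) with hrdef
  have hr : 0 < r := Real.rpow_pos_of_pos (by linarith) _
  have hrα : r ^ α = 2 * x + 1 := by
    rw [hrdef, ← Real.rpow_mul (by linarith), one_div_mul_cancel hα.ne', Real.rpow_one]
  have key : ∀ k : ℕ, x ^ k / Real.Gamma (k * α + 1) ≤
      Real.exp r * (x / (2 * x + 1)) ^ k := by
    intro k
    have hΓ : Real.exp (-r) * (2 * x + 1) ^ k ≤ Real.Gamma (k * α + 1) := by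
      have h1 : Real.exp (-r) * r ^ ((k * α + 1) - 1) ≤ Real.Gamma (k * α + 1) :=
        gamma_lower (by nlinarith [mul_nonneg (Nat.cast_nonneg k) hα.le]) hr
      have h2 : r ^ ((k * α + 1 : ℝ) - 1) = (2 * x + 1) ^ k := by
        rw [add_sub_cancel_right, mul_comm (k:ℝ) α, Real.rpow_mul hr.le,
          Real.rpow_natCast, hrα]
      rwa [h2] at h1
    have hpos : (0:ℝ) < Real.exp (-r) * (2 * x + 1) ^ k := by positivity
    calc x ^ k / Real.Gamma (k * α + 1)
        ≤ x ^ k / (Real.exp (-r) * (2 * x + 1) ^ k) :=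
          div_le_div_of_nonneg_left (by positivity) hpos hΓ
      _ = Real.exp r * (x / (2 * x + 1)) ^ k := by
          rw [Real.exp_neg, div_pow]
          field_simp
  refine Summable.of_nonneg_of_le (fun k => by positivity) key ?_
  refine Summable.mul_left _ (summable_geometric_of_lt_one (by positivity) ?_)
  rw [div_lt_one (by linarith)]
  linarith


lemma beta_real {a b t : ℝ} (ha : 0 < a) (hb : 0 < b) (ht : 0 < t) :
    ∫ s in (0:ℝ)..t, s ^ (b - 1) * (t - s) ^ (a - 1) =
      Real.Gamma a * Real.Gamma b / Real.Gamma (a + b) * t ^ (a + b - 1) := by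
  have hre_a : 0 < (a:ℂ).re := by simpa using ha
  have hre_b : 0 < (b:ℂ).re := by simpa using hb
  have hΓab : Complex.Gamma ((b:ℂ) + a) ≠ 0 := by
    rw [← Complex.ofReal_add, Complex.Gamma_ofReal]
    exact_mod_cast (Real.Gamma_pos_of_pos (show (0:ℝ) < b + a by linarith)).ne'
  have h2 : Complex.betaIntegral b a =
      Complex.Gamma b * Complex.Gamma a / Complex.Gamma ((b:ℂ) + a) := by
    rw [Complex.Gamma_mul_Gamma_eq_betaIntegral hre_b hre_a]
    field_simp
  have h1 := Complex.betaIntegral_scaled (b:ℂ) (a:ℂ) ht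
  have hL : ((∫ s in (0:ℝ)..t, s ^ (b - 1) * (t - s) ^ (a - 1) : ℝ) : ℂ)
      = ∫ s in (0:ℝ)..t, (s:ℂ) ^ ((b:ℂ) - 1) * ((t:ℂ) - s) ^ ((a:ℂ) - 1) := by
    rw [← intervalIntegral.integral_ofReal]
    apply intervalIntegral.integral_congr
    intro x hx
    rw [uIcc_of_le ht.le] at hx
    obtain ⟨hx0, hx1⟩ := hx
    simp only []
    rw [Complex.ofReal_mul, Complex.ofReal_cpow hx0,
      Complex.ofReal_cpow (by linarith : (0:ℝ) ≤ t - x)]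
    push_cast
    ring
  rw [h1, h2, show ((b:ℂ) + a - 1) = ((b + a - 1 : ℝ) : ℂ) by push_cast; ring,
    ← Complex.ofReal_cpow ht.le,
    show ((b:ℂ) + a) = ((b + a : ℝ) : ℂ) by push_cast; ring,
    Complex.Gamma_ofReal, Complex.Gamma_ofReal, Complex.Gamma_ofReal] at hL
  have : (∫ s in (0:ℝ)..t, s ^ (b - 1) * (t - s) ^ (a - 1) : ℝ)
      = t ^ (b + a - 1) * (Real.Gamma b * Real.Gamma a / Real.Gamma (b + a)) := by
    exact_mod_cast hL
  rw [this, add_comm b a]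
  ring

lemma beta_integrable {α t : ℝ} (hα : 0 < α) (ht : 0 < t) (g : ℝ → ℝ)
    (hg : ContinuousOn g (uIcc 0 t)) :
    IntervalIntegrable (fun s => (t - s) ^ (α - 1) * g s) volume 0 t := by
  have h1 : IntervalIntegrable (fun s : ℝ => s ^ (α - 1)) volume 0 t :=
    intervalIntegrable_rpow' (by linarith)
  have h2 : IntervalIntegrable (fun s : ℝ => (t - s) ^ (α - 1)) volume 0 t := by
    have := (h1.comp_sub_left t).symm
    simpa using this
  exact h2.mul_continuousOn hg

theorem mittagLeffler_integral_identity (α ω t : ℝ)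
    (hα : 0 < α) (hω : 0 < ω) (ht : 0 ≤ t) :
    (ω / Real.Gamma α) *
        (∫ s in (0 : ℝ)..t, (t - s) ^ (α - 1) * mittagLeffler α (ω * s ^ α)) =
      mittagLeffler α (ω * t ^ α) - 1 ∧
    (∫ s in (0 : ℝ)..t, (t - s) ^ (α - 1) * mittagLeffler α (ω * s ^ α)) ≤
      (Real.Gamma α / ω) * mittagLeffler α (ω * t ^ α) := by
  have hΓα : 0 < Real.Gamma α := Real.Gamma_pos_of_pos hα
  rcases eq_or_lt_of_le ht with h0 | ht'
  · -- case t = 0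
    have hE0 : mittagLeffler α 0 = 1 := by
      unfold mittagLeffler
      rw [tsum_eq_single 0 (fun k hk => by simp [zero_pow hk])]
      simp [Real.Gamma_one]
    rw [← h0, intervalIntegral.integral_same]
    simp only [Real.zero_rpow hα.ne', mul_zero, hE0]
    constructor
    · norm_num
    · positivity
  -- case 0 < t
  set x := ω * t ^ α with hxdef
  have hx : 0 ≤ x := by positivity
  have hS : Summable (fun k : ℕ => x ^ k / Real.Gamma (k * α + 1)) := ml_summable hα hx
  have hS1 : Summable (fun k : ℕ => x ^ (k + 1) / Real.Gamma ((k + 1 : ℕ) * α + 1)) :=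
    (summable_nat_add_iff 1).mpr hS
  set F : ℕ → ℝ → ℝ :=
    fun k s => (t - s) ^ (α - 1) * ((ω * s ^ α) ^ k / Real.Gamma (k * α + 1)) with hFdef
  have hΓk : ∀ k : ℕ, (0:ℝ) < Real.Gamma (k * α + 1) := fun k =>
    Real.Gamma_pos_of_pos (by positivity)
  have hΓk1 : ∀ k : ℕ, (0:ℝ) < Real.Gamma ((k + 1 : ℕ) * α + 1) := fun k =>
    Real.Gamma_pos_of_pos (by positivity)
  have hcont : ∀ k : ℕ, Continuous (fun s : ℝ => (ω * s ^ α) ^ k / Real.Gamma (k * α + 1)) := by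
    intro k
    have h1 : Continuous (fun s : ℝ => s ^ α) := by
      rw [continuous_iff_continuousAt]
      exact fun s => Real.continuousAt_rpow_const s α (Or.inr hα.le)
    exact (((continuous_const.mul h1).pow k).div_const _)
  have hFint : ∀ k, IntervalIntegrable (F k) volume 0 t := fun k =>
    beta_integrable hα ht' _ (hcont k).continuousOn
  have hpow : ∀ s : ℝ, 0 ≤ s → ∀ k : ℕ, (ω * s ^ α) ^ k = ω ^ k * s ^ ((k:ℝ) * α) := by
    intro s hs k
    rw [mul_pow, ← Real.rpow_natCast (s ^ α) k, ← Real.rpow_mul hs, mul_comm α]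
  have hFval : ∀ k : ℕ, ∫ s in (0:ℝ)..t, F k s =
      Real.Gamma α / ω * (x ^ (k + 1) / Real.Gamma ((k + 1 : ℕ) * α + 1)) := by
    intro k
    have e1 : ∫ s in (0:ℝ)..t, F k s = (ω ^ k / Real.Gamma (k * α + 1)) *
        ∫ s in (0:ℝ)..t, s ^ ((k:ℝ) * α) * (t - s) ^ (α - 1) := by
      rw [← intervalIntegral.integral_const_mul]
      apply intervalIntegral.integral_congr
      intro s hs
      rw [uIcc_of_le ht] at hs
      simp only [hFdef]
      rw [hpow s hs.1 k]
      ring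
    have e2 := beta_real hα (show (0:ℝ) < (k:ℝ) * α + 1 by positivity) ht'
    rw [add_sub_cancel_right] at e2
    rw [e1, e2]
    have hx1 : x ^ (k + 1) = ω ^ (k + 1) * t ^ (((k:ℝ) + 1) * α) := by
      rw [hxdef, mul_pow, ← Real.rpow_natCast (t ^ α) (k + 1), ← Real.rpow_mul ht, mul_comm α]
      push_cast
      ring_nf
    have hexp1 : α + ((k:ℝ) * α + 1) - 1 = ((k:ℝ) + 1) * α := by ring
    have hexp2 : α + ((k:ℝ) * α + 1) = ((k + 1 : ℕ) : ℝ) * α + 1 := by push_cast; ring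
    rw [hexp1, hexp2, hx1]
    have h1 := (hΓk k).ne'
    have h2 := (hΓk1 k).ne'
    field_simp
    ring
  have hswap : ∫ s in (0:ℝ)..t, (t - s) ^ (α - 1) * mittagLeffler α (ω * s ^ α) =
      ∑' k, ∫ s in (0:ℝ)..t, F k s := by
    have hpt : ∀ s : ℝ, (t - s) ^ (α - 1) * mittagLeffler α (ω * s ^ α) = ∑' k, F k s := by
      intro s
      rw [mittagLeffler, ← tsum_mul_left]
    simp only [hpt]
    have hFi : ∀ k, Integrable (F k) (volume.restrict (Set.Ioc (0:ℝ) t)) := fun k =>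
      (intervalIntegrable_iff_integrableOn_Ioc_of_le ht).mp (hFint k)
    have hnorm : ∀ k, ∫ s, ‖F k s‖ ∂(volume.restrict (Set.Ioc (0:ℝ) t)) =
        ∫ s in (0:ℝ)..t, F k s := by
      intro k
      rw [intervalIntegral.integral_of_le ht]
      apply MeasureTheory.integral_congr_ae
      filter_upwards [MeasureTheory.ae_restrict_mem measurableSet_Ioc] with s hs
      have h1 : (0:ℝ) < s := hs.1
      have h2 : (0:ℝ) ≤ t - s := by linarith [hs.2]
      rw [Real.norm_of_nonneg]
      simp only [hFdef]
      positivity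
    have hFsum : Summable fun k => ∫ s, ‖F k s‖ ∂(volume.restrict (Set.Ioc (0:ℝ) t)) := by
      simp only [hnorm, hFval]
      exact hS1.mul_left _
    rw [intervalIntegral.integral_of_le ht]
    have := (MeasureTheory.integral_tsum_of_summable_integral_norm hFi hFsum).symm
    rw [this]
    apply tsum_congr
    intro k
    rw [intervalIntegral.integral_of_le ht]
  have hsum_val : (∑' k, ∫ s in (0:ℝ)..t, F k s) =
      Real.Gamma α / ω * (mittagLeffler α x - 1) := by
    have htail : (∑' k : ℕ, x ^ (k + 1) / Real.Gamma ((k + 1 : ℕ) * α + 1)) =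
        mittagLeffler α x - 1 := by
      have h := Summable.tsum_eq_zero_add hS
      rw [mittagLeffler, h]
      simp [Real.Gamma_one]
    simp only [hFval]
    rw [tsum_mul_left, htail]
  constructor
  · rw [hswap, hsum_val]
    field_simp
  · rw [hswap, hsum_val]
    have hE : mittagLeffler α x - 1 ≤ mittagLeffler α x := by linarith
    exact mul_le_mul_of_nonneg_left hE (by positivity)
end

section
/- Let 1 < α < 2, 0 < β < 1, α - β > 1, h > 0, λ, μ ∈ ℝ, T > 0, and let f : [0,T] × ℝ → ℝ be continuous and satisfy |f(t,y) - f(t,z)| ≤ L_f |y - z| for all t ∈ [0,T], y, z ∈ ℝ, with L_f > 0. Let K : ℝ → ℝ be any measurable kernel satisfying |K(s)| ≤ s^{α-1} exp(|λ| s^{α-β} + |μ| s^α) for s ∈ [0,T]. Then the operator (𝔉y)(t) := g(t) + ∫_0^t K(t-s) f(s, y(s)) ds (for any fixed continuous g) is a contraction on C([0,T], ℝ) equipped with the weighted norm ‖y‖_ω = max_{0≤t≤T} |y(t)| / E_α(ω t^α), provided ω > L_f Γ(α) exp(|λ| T^{α-β} + |μ| T^α); its Lipschitz constant is at most (Γ(α)/ω)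 L_f exp(|λ| T^{α-β} + |μ| T^α) < 1. -/
open MeasureTheory Set
open scoped ENNReal

lemma gammaMono {x y : ℝ} (hx : 2 ≤ x) (hxy : x ≤ y) : Real.Gamma x ≤ Real.Gamma y :=
  Real.Gamma_strictMonoOn_Ici.monotoneOn hx (le_trans hx hxy) hxy

lemma mlSummable {a : ℝ} (ha : 1 ≤ a) {x : ℝ} (hx : 0 ≤ x) :
    Summable (fun k : ℕ => x ^ k / Real.Gamma (k * a + 1)) := by
  refine Summable.of_nonneg_of_le (fun k => by positivity) (fun k => ?_)
    (Real.summable_pow_div_factorial x)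
  have h1 : ((k.factorial : ℕ) : ℝ) = Real.Gamma (k + 1) := by
    rw [Real.Gamma_nat_eq_factorial]
  rcases Nat.eq_zero_or_pos k with hk | hk
  · subst hk; simp [Real.Gamma_one]
  · have hk1 : (2 : ℝ) ≤ (k : ℝ) + 1 := by
      have : (1:ℝ) ≤ (k:ℝ) := by exact_mod_cast hk
      linarith
    have hle : Real.Gamma ((k:ℝ) + 1) ≤ Real.Gamma ((k:ℝ) * a + 1) := by
      apply gammaMono hk1
      have : (k:ℝ) * 1 ≤ (k:ℝ) * a := by
        apply mul_le_mul_of_nonneg_left ha (by positivity)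
      linarith
    rw [div_le_div_iff₀ (Real.Gamma_pos_of_pos (by positivity)) (by positivity)]
    calc x ^ k * ((k.factorial : ℕ) : ℝ) = x ^ k * Real.Gamma ((k:ℝ)+1) := by rw [h1]
    _ ≤ x ^ k * Real.Gamma ((k:ℝ) * a + 1) :=
        mul_le_mul_of_nonneg_left hle (by positivity)

lemma mlOneLe {a : ℝ} (ha : 1 ≤ a) {x : ℝ} (hx : 0 ≤ x) : 1 ≤ mittagLeffler a x := by
  have hs := mlSummable ha hx
  have h0 : x ^ (0:ℕ) / Real.Gamma ((0:ℕ) * a + 1) = 1 := by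
    simp [Real.Gamma_one]
  calc (1:ℝ) = x ^ (0:ℕ) / Real.Gamma ((0:ℕ) * a + 1) := h0.symm
  _ ≤ mittagLeffler a x := Summable.le_tsum hs 0 (fun k _ => by positivity)

lemma mlPos {a : ℝ} (ha : 1 ≤ a) {x : ℝ} (hx : 0 ≤ x) : 0 < mittagLeffler a x :=
  lt_of_lt_of_le one_pos (mlOneLe ha hx)
open MeasureTheory Set intervalIntegral

lemma realBeta {a b : ℝ} (ha : 0 < a) (hb : 0 < b) :
    ∫ x in (0:ℝ)..1, x ^ (a - 1) * (1 - x) ^ (b - 1)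
      = Real.Gamma a * Real.Gamma b / Real.Gamma (a + b) := by
  have h := Complex.Gamma_mul_Gamma_eq_betaIntegral (s := (a:ℂ)) (t := (b:ℂ))
    (by simpa using ha) (by simpa using hb)
  have hBeta : Complex.betaIntegral (a:ℂ) (b:ℂ)
      = ((∫ x in (0:ℝ)..1, x ^ (a - 1) * (1 - x) ^ (b - 1) : ℝ) : ℂ) := by
    rw [Complex.betaIntegral, ← intervalIntegral.integral_ofReal]
    apply intervalIntegral.integral_congr
    intro x hx
    rw [Set.uIcc_of_le (by norm_num : (0:ℝ) ≤ 1)] at hx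
    have h1 : ((x ^ (a-1) : ℝ) : ℂ) = (x:ℂ) ^ ((a:ℂ) - 1) := by
      rw [Complex.ofReal_cpow hx.1]; norm_cast
    have h2 : (((1 - x) ^ (b-1) : ℝ) : ℂ) = (1 - (x:ℂ)) ^ ((b:ℂ) - 1) := by
      rw [Complex.ofReal_cpow (by linarith [hx.2])]; push_cast; ring_nf
    push_cast [← h1, ← h2]
    ring
  have hab : Complex.Gamma ((a:ℂ) + (b:ℂ)) = ((Real.Gamma (a+b) : ℝ) : ℂ) := by
    rw [← Complex.ofReal_add, Complex.Gamma_ofReal]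
  rw [Complex.Gamma_ofReal, Complex.Gamma_ofReal, hab, hBeta, ← Complex.ofReal_mul,
    ← Complex.ofReal_mul] at h
  have h' : Real.Gamma a * Real.Gamma b
      = Real.Gamma (a+b) * ∫ x in (0:ℝ)..1, x ^ (a - 1) * (1 - x) ^ (b - 1) := by
    exact_mod_cast h
  rw [eq_div_iff (Real.Gamma_pos_of_pos (by linarith)).ne']
  rw [h']; ring

lemma convIntegral {a t c : ℝ} (ha : 0 < a) (hc : 0 ≤ c) (ht : 0 < t) :
    ∫ s in (0:ℝ)..t, (t - s) ^ (a - 1) * s ^ c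
      = Real.Gamma (c + 1) * Real.Gamma a / Real.Gamma (c + 1 + a) * t ^ (a + c) := by
  have hsub := intervalIntegral.integral_comp_mul_left
    (f := fun s => (t - s) ^ (a - 1) * s ^ c) (a := (0:ℝ)) (b := 1) (c := t) ht.ne'
  rw [mul_zero, mul_one] at hsub
  have key : (∫ x in (0:ℝ)..1, (t - t * x) ^ (a - 1) * (t * x) ^ c)
      = t ^ (a - 1) * t ^ c * (Real.Gamma (c+1) * Real.Gamma a / Real.Gamma (c + 1 + a)) := by
    have hcongr : ∀ x ∈ Set.uIcc (0:ℝ) 1,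
        (t - t * x) ^ (a - 1) * (t * x) ^ c
          = (t ^ (a-1) * t ^ c) * (x ^ ((c+1) - 1) * (1 - x) ^ (a - 1)) := by
      intro x hx
      rw [Set.uIcc_of_le (by norm_num : (0:ℝ) ≤ 1)] at hx
      have h1 : t - t * x = t * (1 - x) := by ring
      rw [h1, Real.mul_rpow ht.le (by linarith [hx.2]), Real.mul_rpow ht.le hx.1]
      have : (c + 1) - 1 = c := by ring
      rw [this]; ring
    rw [intervalIntegral.integral_congr hcongr, intervalIntegral.integral_const_mul,
      realBeta (by linarith) ha]
  have h2 : (∫ s in (0:ℝ)..t, (t - s) ^ (a - 1) * s ^ c)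
      = t * ∫ x in (0:ℝ)..1, (t - t * x) ^ (a - 1) * (t * x) ^ c := by
    rw [hsub, smul_eq_mul, ← mul_assoc, mul_inv_cancel₀ ht.ne', one_mul]
  rw [h2, key]
  have h3 : t ^ (a + c) = t * (t ^ (a - 1) * t ^ c) := by
    nth_rewrite 2 [← Real.rpow_one t]
    rw [← Real.rpow_add ht, ← Real.rpow_add ht]; ring_nf
  rw [h3]; ring

lemma keyLintegral {a w t C : ℝ} (ha : 1 < a) (hw : 0 < w) (ht : 0 < t) (hC : 0 ≤ C) :
    ∫⁻ s in Set.Ioc (0:ℝ) t,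
        ENNReal.ofReal (C * ((t - s) ^ (a - 1) * mittagLeffler a (w * s ^ a)))
      ≤ ENNReal.ofReal (C * (Real.Gamma a / w) * mittagLeffler a (w * t ^ a)) := by
  have ha0 : (0:ℝ) < a := by linarith
  have ha1 : (0:ℝ) ≤ a - 1 := by linarith
  have hΓ : ∀ u : ℝ, 0 < u → 0 < Real.Gamma u := fun u hu => Real.Gamma_pos_of_pos hu
  set G : ℕ → ℝ → ℝ := fun k s => C * ((t - s) ^ (a - 1) * ((w * s ^ a) ^ k / Real.Gamma (k * a + 1)))
    with hG
  -- continuity of each G k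
  have hGcont : ∀ k, Continuous (G k) := by
    intro k
    apply continuous_const.mul
    apply Continuous.mul
    · exact (Real.continuous_rpow_const ha1).comp (continuous_const.sub continuous_id)
    · exact (((continuous_const.mul ((Real.continuous_rpow_const ha0.le))).pow k).div_const _)
  -- step 1 : rewrite the integrand as a tsum
  have step1 : ∫⁻ s in Set.Ioc (0:ℝ) t,
      ENNReal.ofReal (C * ((t - s) ^ (a - 1) * mittagLeffler a (w * s ^ a)))
      = ∫⁻ s in Set.Ioc (0:ℝ) t, ∑' k : ℕ, ENNReal.ofReal (G k s) := by
    apply setLIntegral_congr_fun measurableSet_Ioc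
    intro s hs
    dsimp only
    have hts : (0:ℝ) ≤ t - s := by linarith [hs.2]
    have hws : (0:ℝ) ≤ w * s ^ a := mul_nonneg hw.le (Real.rpow_nonneg hs.1.le _)
    have hsum := mlSummable ha.le hws
    rw [mittagLeffler, ← tsum_mul_left, ← tsum_mul_left]
    exact ENNReal.ofReal_tsum_of_nonneg (fun k =>
      mul_nonneg hC (mul_nonneg (Real.rpow_nonneg hts _)
        (div_nonneg (pow_nonneg hws k) (hΓ _ (by positivity)).le)))
      ((hsum.mul_left _).mul_left _)
  rw [step1, lintegral_tsum (fun k => ((hGcont k).measurable.ennreal_ofReal).aemeasurable)]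
  -- step 2 : evaluate each term
  have step2 : ∀ k : ℕ, (∫⁻ s in Set.Ioc (0:ℝ) t, ENNReal.ofReal (G k s))
      = ENNReal.ofReal (C * (Real.Gamma a / w) *
          ((w * t ^ a) ^ (k+1) / Real.Gamma ((k+1 : ℕ) * a + 1))) := by
    intro k
    have hint : IntegrableOn (G k) (Set.Ioc (0:ℝ) t) volume :=
      (hGcont k).integrableOn_Ioc
    rw [← ofReal_integral_eq_lintegral_ofReal hint ?_]
    · congr 1
      have : (∫ s in Set.Ioc (0:ℝ) t, G k s) = ∫ s in (0:ℝ)..t, G k s :=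
        (intervalIntegral.integral_of_le ht.le).symm
      rw [this]
      have hcongr : ∀ s ∈ Set.uIcc (0:ℝ) t, G k s
          = (C * w ^ k / Real.Gamma (k * a + 1)) * ((t - s) ^ (a - 1) * s ^ (a * k)) := by
        intro s hs
        rw [Set.uIcc_of_le ht.le] at hs
        have h1 : (w * s ^ a) ^ k = w ^ k * s ^ (a * k) := by
          rw [mul_pow, ← Real.rpow_natCast (s ^ a) k, ← Real.rpow_mul hs.1]
        rw [hG]; simp only []
        rw [h1]; ring
      rw [intervalIntegral.integral_congr hcongr, intervalIntegral.integral_const_mul,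
        convIntegral ha0 (by positivity) ht]
      have hΓk : Real.Gamma ((k:ℝ) * a + 1) ≠ 0 := (hΓ _ (by positivity)).ne'
      have e1 : a * (k:ℝ) + 1 = (k:ℝ) * a + 1 := by ring
      have e2 : ((k+1 : ℕ) : ℝ) * a + 1 = a * (k:ℝ) + 1 + a := by push_cast; ring
      have e3 : (w * t ^ a) ^ (k+1) = w ^ (k+1) * t ^ (a + a * k) := by
        rw [mul_pow, ← Real.rpow_natCast (t ^ a) (k+1), ← Real.rpow_mul ht.le]
        push_cast; ring_nf
      rw [e1, e2, e3]
      field_simp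
      ring
    · apply (ae_restrict_iff' measurableSet_Ioc).2
      apply Filter.Eventually.of_forall
      intro s hs
      have hts : (0:ℝ) ≤ t - s := by linarith [hs.2]
      have hws : (0:ℝ) ≤ w * s ^ a := mul_nonneg hw.le (Real.rpow_nonneg hs.1.le _)
      have h1 : (0:ℝ) ≤ (t - s) ^ (a - 1) := Real.rpow_nonneg hts _
      have h2 : (0:ℝ) ≤ (w * s ^ a) ^ k := pow_nonneg hws k
      exact mul_nonneg hC (mul_nonneg h1 (div_nonneg h2 (hΓ _ (by positivity)).le))
  simp only [step2]
  set D : ℕ → ℝ≥0∞ := fun j =>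
    ENNReal.ofReal (C * (Real.Gamma a / w) * ((w * t ^ a) ^ j / Real.Gamma ((j:ℝ) * a + 1)))
    with hD
  have hDsucc : ∀ k : ℕ, ENNReal.ofReal (C * (Real.Gamma a / w) *
      ((w * t ^ a) ^ (k+1) / Real.Gamma ((k+1 : ℕ) * a + 1))) = D (k+1) := by
    intro k; rw [hD]
  calc (∑' k : ℕ, ENNReal.ofReal (C * (Real.Gamma a / w) *
      ((w * t ^ a) ^ (k+1) / Real.Gamma ((k+1 : ℕ) * a + 1))))
      = ∑' k : ℕ, D (k + 1) := by simp only [hDsucc]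
  _ ≤ ∑' j : ℕ, D j := ENNReal.tsum_comp_le_tsum_of_injective (add_left_injective 1) D
  _ = ENNReal.ofReal (C * (Real.Gamma a / w) * mittagLeffler a (w * t ^ a)) := by
      rw [hD, mittagLeffler]
      have hwt : (0:ℝ) ≤ w * t ^ a := by positivity
      rw [← ENNReal.ofReal_tsum_of_nonneg (fun j =>
        mul_nonneg (mul_nonneg hC (div_nonneg (hΓ a ha0).le hw.le))
          (div_nonneg (pow_nonneg hwt j) (hΓ _ (by positivity)).le))
        (((mlSummable ha.le hwt).mul_left _))]
      rw [tsum_mul_left]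
theorem operator_contraction (α β lam mu T Lf ω : ℝ)
    (hα1 : 1 < α) (hα2 : α < 2) (hβ0 : 0 < β) (hβ1 : β < 1) (hαβ : α - β > 1)
    (h : ℝ) (hh : 0 < h) (hT : 0 < T) (hLf : 0 < Lf)
    (f : ℝ → ℝ → ℝ)
    (hf_cont : ContinuousOn (fun p : ℝ × ℝ => f p.1 p.2)
      (Set.Icc 0 T ×ˢ Set.univ))
    (hf_lip : ∀ t ∈ Set.Icc (0 : ℝ) T, ∀ y z : ℝ, |f t y - f t z| ≤ Lf * |y - z|)
    (K : ℝ → ℝ) (hK_meas : Measurable K)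
    (hK : ∀ s ∈ Set.Icc (0 : ℝ) T,
      |K s| ≤ s ^ (α - 1) * Real.exp (|lam| * s ^ (α - β) + |mu| * s ^ α))
    (g : ℝ → ℝ) (hg : Continuous g)
    (hω : ω > Lf * Real.Gamma α * Real.exp (|lam| * T ^ (α - β) + |mu| * T ^ α)) :
    (∀ y z : ℝ → ℝ, Continuous y → Continuous z →
      (⨆ t : Set.Icc (0 : ℝ) T,
        |(g t + ∫ s in (0 : ℝ)..(t : ℝ), K ((t : ℝ) - s) * f s (y s)) -
          (g t + ∫ s in (0 : ℝ)..(t : ℝ), K ((t : ℝ) - s) * f s (z s))| /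
          mittagLeffler α (ω * (t : ℝ) ^ α)) ≤
        (Real.Gamma α / ω) * Lf *
            Real.exp (|lam| * T ^ (α - β) + |mu| * T ^ α) *
          ⨆ t : Set.Icc (0 : ℝ) T, |y t - z t| / mittagLeffler α (ω * (t : ℝ) ^ α)) ∧
    (Real.Gamma α / ω) * Lf * Real.exp (|lam| * T ^ (α - β) + |mu| * T ^ α) < 1 := by
  have hα0 : (0:ℝ) < α := by linarith
  have hΓ : 0 < Real.Gamma α := Real.Gamma_pos_of_pos hα0
  set A := Real.exp (|lam| * T ^ (α - β) + |mu| * T ^ α) with hA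
  have hA0 : 0 < A := Real.exp_pos _
  have hω0 : 0 < ω := lt_trans (by positivity) hω
  haveI : Nonempty (Set.Icc (0:ℝ) T) := ⟨⟨0, le_refl _, hT.le⟩⟩
  constructor
  · intro y z hy hz
    obtain ⟨R, hR⟩ := (isCompact_Icc (a := (0:ℝ)) (b := T)).exists_bound_of_continuousOn
      ((hy.sub hz).continuousOn)
    have hEpos : ∀ s : ℝ, 0 ≤ s → 0 < mittagLeffler α (ω * s ^ α) := fun s hs =>
      mlPos hα1.le (mul_nonneg hω0.le (Real.rpow_nonneg hs _))
    have hE1 : ∀ s : ℝ, 0 ≤ s → 1 ≤ mittagLeffler α (ω * s ^ α) := fun s hs =>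
      mlOneLe hα1.le (mul_nonneg hω0.le (Real.rpow_nonneg hs _))
    have hbdd : BddAbove (Set.range fun t : Set.Icc (0:ℝ) T =>
        |y t - z t| / mittagLeffler α (ω * (t:ℝ) ^ α)) := by
      refine ⟨max R 0, ?_⟩
      rintro _ ⟨t, rfl⟩
      have h1 : |y t - z t| / mittagLeffler α (ω * (t:ℝ) ^ α) ≤ |y t - z t| :=
        div_le_self (abs_nonneg _) (hE1 _ t.2.1)
      have h2 : |y t - z t| ≤ R := by
        have := hR t t.2
        simpa [Real.norm_eq_abs] using this
      exact h1.trans (h2.trans (le_max_left _ _))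
    set M := ⨆ t : Set.Icc (0:ℝ) T, |y t - z t| / mittagLeffler α (ω * (t:ℝ) ^ α) with hM
    have hM0 : 0 ≤ M := by
      refine le_trans ?_ (le_ciSup hbdd (⟨0, le_refl _, hT.le⟩ : Set.Icc (0:ℝ) T))
      exact div_nonneg (abs_nonneg _) (hEpos 0 (le_refl 0)).le
    have hMb : ∀ s : ℝ, s ∈ Set.Icc (0:ℝ) T →
        |y s - z s| ≤ M * mittagLeffler α (ω * s ^ α) := by
      intro s hs
      have h1 := le_ciSup hbdd (⟨s, hs⟩ : Set.Icc (0:ℝ) T)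
      rw [div_le_iff₀ (hEpos s hs.1)] at h1
      simpa [mul_comm] using h1
    apply ciSup_le
    intro t
    have ht01 : (0:ℝ) ≤ t := t.2.1
    have ht02 : (t:ℝ) ≤ T := t.2.2
    rw [add_sub_add_left_eq_sub]
    rcases eq_or_lt_of_le ht01 with h0 | h0
    · rw [← h0]
      simp only [intervalIntegral.integral_same, sub_zero, abs_zero, zero_div]
      exact mul_nonneg (mul_nonneg (mul_nonneg (div_nonneg hΓ.le hω0.le) hLf.le) hA0.le) hM0
    · set t0 : ℝ := (t : ℝ) with ht0def
      have hFy : ContinuousOn (fun s => f s (y s)) (Set.Icc 0 T) := by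
        have hc : ContinuousOn (fun s : ℝ => ((s, y s) : ℝ × ℝ)) (Set.Icc 0 T) :=
          (continuous_id.prodMk hy).continuousOn
        exact hf_cont.comp hc (fun s hs => ⟨hs, Set.mem_univ _⟩)
      have hFz : ContinuousOn (fun s => f s (z s)) (Set.Icc 0 T) := by
        have hc : ContinuousOn (fun s : ℝ => ((s, z s) : ℝ × ℝ)) (Set.Icc 0 T) :=
          (continuous_id.prodMk hz).continuousOn
        exact hf_cont.comp hc (fun s hs => ⟨hs, Set.mem_univ _⟩)
      have hKb : ∀ s ∈ Set.Ioc (0:ℝ) t0, |K (t0 - s)| ≤ (t0 - s) ^ (α - 1) * A := by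
        intro s hs
        have h1 : t0 - s ∈ Set.Icc (0:ℝ) T := ⟨by linarith [hs.2], by linarith [hs.1]⟩
        refine (hK _ h1).trans ?_
        refine mul_le_mul_of_nonneg_left ?_ (Real.rpow_nonneg h1.1 _)
        rw [hA]
        apply Real.exp_le_exp.2
        have e1 : (t0 - s) ^ (α - β) ≤ T ^ (α - β) := Real.rpow_le_rpow h1.1 h1.2 (by linarith)
        have e2 : (t0 - s) ^ α ≤ T ^ α := Real.rpow_le_rpow h1.1 h1.2 hα0.le
        have l1 := abs_nonneg lam
        have l2 := abs_nonneg mu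
        nlinarith
      have hTb : ∀ s ∈ Set.Ioc (0:ℝ) t0, (t0 - s) ^ (α-1) ≤ T ^ (α-1) := fun s hs =>
        Real.rpow_le_rpow (by linarith [hs.2]) (by linarith [hs.1]) (by linarith)
      have hmeasK : Measurable (fun s : ℝ => K (t0 - s)) :=
        hK_meas.comp (measurable_const.sub measurable_id)
      have hsub : Set.Ioc (0:ℝ) t0 ⊆ Set.Icc (0:ℝ) T :=
        fun x hx => ⟨hx.1.le, hx.2.trans ht02⟩
      have hInt : ∀ (F : ℝ → ℝ), ContinuousOn F (Set.Icc 0 T) →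
          IntervalIntegrable (fun s => K (t0 - s) * F s) volume 0 t0 := by
        intro F hF
        obtain ⟨CF, hCF⟩ := (isCompact_Icc (a:=(0:ℝ)) (b:=T)).exists_bound_of_continuousOn hF
        rw [intervalIntegrable_iff_integrableOn_Ioc_of_le ht01]
        constructor
        · exact hmeasK.aestronglyMeasurable.mul
            ((hF.mono hsub).aestronglyMeasurable measurableSet_Ioc)
        · apply HasFiniteIntegral.restrict_of_bounded (C := (T ^ (α-1) * A) * CF)
            measure_Ioc_lt_top
          refine (ae_restrict_iff' measurableSet_Ioc).2 (Filter.Eventually.of_forall ?_)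
          intro s hs
          have hsT : s ∈ Set.Icc (0:ℝ) T := hsub hs
          rw [norm_mul]
          have h1 : ‖K (t0 - s)‖ ≤ T ^ (α-1) * A := by
            rw [Real.norm_eq_abs]
            exact (hKb s hs).trans (mul_le_mul_of_nonneg_right (hTb s hs) hA0.le)
          have h2 := hCF s hsT
          exact mul_le_mul h1 h2 (norm_nonneg _)
            (mul_nonneg (Real.rpow_nonneg hT.le _) hA0.le)
      have hIy := hInt _ hFy
      have hIz := hInt _ hFz
      rw [← intervalIntegral.integral_sub hIy hIz]
      simp only [← mul_sub]
      rw [div_le_iff₀ (hEpos t0 ht01)]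
      rw [intervalIntegral.integral_of_le ht01]
      set C := A * (Lf * M) with hC
      have hC0 : 0 ≤ C := mul_nonneg hA0.le (mul_nonneg hLf.le hM0)
      have key := keyLintegral (a:=α) (w:=ω) (t:=t0) (C:=C) hα1 hω0 h0 hC0
      have hmono : (∫⁻ s in Set.Ioc (0:ℝ) t0,
            ENNReal.ofReal ‖K (t0 - s) * (f s (y s) - f s (z s))‖)
          ≤ ∫⁻ s in Set.Ioc (0:ℝ) t0,
            ENNReal.ofReal (C * ((t0 - s) ^ (α-1) * mittagLeffler α (ω * s ^ α))) := by
        refine lintegral_mono_ae ((ae_restrict_iff' measurableSet_Ioc).2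
          (Filter.Eventually.of_forall ?_))
        intro s hs
        apply ENNReal.ofReal_le_ofReal
        have hsT : s ∈ Set.Icc (0:ℝ) T := hsub hs
        rw [norm_mul, Real.norm_eq_abs, Real.norm_eq_abs]
        have h1 := hKb s hs
        have h2 : |f s (y s) - f s (z s)| ≤ Lf * (M * mittagLeffler α (ω * s ^ α)) := by
          refine (hf_lip s hsT _ _).trans ?_
          refine mul_le_mul_of_nonneg_left ?_ hLf.le
          simpa [mul_comm] using hMb s hsT
        calc |K (t0 - s)| * |f s (y s) - f s (z s)|
            ≤ ((t0 - s) ^ (α-1) * A) * (Lf * (M * mittagLeffler α (ω * s ^ α))) :=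
              mul_le_mul h1 h2 (abs_nonneg _)
                (mul_nonneg (Real.rpow_nonneg (by linarith [hs.2]) _) hA0.le)
        _ = C * ((t0 - s) ^ (α-1) * mittagLeffler α (ω * s ^ α)) := by rw [hC]; ring
      have hfinal : |∫ s in Set.Ioc (0:ℝ) t0, K (t0 - s) * (f s (y s) - f s (z s))|
          ≤ C * (Real.Gamma α / ω) * mittagLeffler α (ω * t0 ^ α) := by
        have hn := MeasureTheory.norm_integral_le_lintegral_norm
          (μ := volume.restrict (Set.Ioc (0:ℝ) t0))
          (f := fun s => K (t0 - s) * (f s (y s) - f s (z s)))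
        rw [Real.norm_eq_abs] at hn
        refine hn.trans ?_
        have hle := le_trans hmono key
        have hrhs0 : 0 ≤ C * (Real.Gamma α / ω) * mittagLeffler α (ω * t0 ^ α) :=
          mul_nonneg (mul_nonneg hC0 (div_nonneg hΓ.le hω0.le)) (hEpos t0 ht01).le
        calc (∫⁻ s in Set.Ioc (0:ℝ) t0,
              ENNReal.ofReal ‖K (t0 - s) * (f s (y s) - f s (z s))‖).toReal
            ≤ (ENNReal.ofReal (C * (Real.Gamma α / ω) *
                mittagLeffler α (ω * t0 ^ α))).toReal :=
              ENNReal.toReal_mono ENNReal.ofReal_ne_top hle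
        _ = C * (Real.Gamma α / ω) * mittagLeffler α (ω * t0 ^ α) :=
              ENNReal.toReal_ofReal hrhs0
      refine hfinal.trans (le_of_eq ?_)
      rw [hC]; ring
  · rw [div_mul_eq_mul_div, div_mul_eq_mul_div, div_lt_one hω0]
    have e : Real.Gamma α * Lf * A = Lf * Real.Gamma α * A := by ring
    linarith [hω, e]
end

section
/- Under the hypotheses of the preceding contraction result (f Lipschitz in the second variable with constant L_f, K bounded by s^{α-1} exp(|λ| s^{α-β} + |μ| s^α), g continuous), the fixed point equation y(t) = g(t) + ∫_0^t K(t-s) f(s, y(s)) ds has a unique solution y ∈ C([0,T], ℝ). -/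
open MeasureTheory Set Filter Topology

private lemma aux_cont_rpow {c : ℝ} (hc : 0 ≤ c) : Continuous fun u : ℝ => u ^ c := by
  rw [continuous_iff_continuousAt]
  exact fun x => Real.continuousAt_rpow_const x c (Or.inr hc)

private lemma aux_integrable {K B H : ℝ → ℝ} {T t : ℝ} (ht0 : 0 ≤ t) (htT : t ≤ T)
    (hKm : Measurable K) (hB : Continuous B)
    (hKB : ∀ u ∈ Set.Icc (0:ℝ) T, |K u| ≤ B u) (hH : Continuous H) :
    IntervalIntegrable (fun s => K (t - s) * H s) volume 0 t := by
  have hdom : IntervalIntegrable (fun s => B (t - s) * |H s|) volume 0 t :=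
    ((hB.comp (continuous_const.sub continuous_id)).mul hH.abs).intervalIntegrable 0 t
  refine hdom.mono_fun ?_ ?_
  · exact ((hKm.comp (measurable_const.sub measurable_id)).mul hH.measurable).aestronglyMeasurable
  · rw [Set.uIoc_of_le ht0]
    refine (MeasureTheory.ae_restrict_iff' measurableSet_Ioc).2 (Filter.Eventually.of_forall ?_)
    intro s hs
    have hts : t - s ∈ Set.Icc (0:ℝ) T :=
      ⟨by linarith [hs.2], by linarith [hs.1]⟩
    have h1 : ‖K (t - s) * H s‖ = |K (t - s)| * |H s| := abs_mul _ _
    have h2 : |K (t - s)| * |H s| ≤ B (t - s) * |H s| :=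
      mul_le_mul_of_nonneg_right (hKB _ hts) (abs_nonneg _)
    calc ‖K (t - s) * H s‖ = |K (t - s)| * |H s| := h1
      _ ≤ B (t - s) * |H s| := h2
      _ ≤ ‖B (t - s) * |H s|‖ := le_abs_self _

private lemma aux_rw {K H : ℝ → ℝ} {T t : ℝ} (ht : t ∈ Set.Icc (0:ℝ) T) :
    (∫ s in (0:ℝ)..t, K (t - s) * H s)
      = ∫ u in (0:ℝ)..T, Set.indicator {x | x ≤ t} (fun u => K u * H (t - u)) u := by
  rw [intervalIntegral.integral_indicator ht]
  calc ∫ s in (0:ℝ)..t, K (t - s) * H s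
      = ∫ s in (0:ℝ)..t, K (t - s) * H (t - (t - s)) := by
        refine intervalIntegral.integral_congr fun s _ => ?_
        rw [sub_sub_cancel]
    _ = ∫ u in (t - t)..(t - 0), K u * H (t - u) :=
        intervalIntegral.integral_comp_sub_left (fun u => K u * H (t - u)) t
    _ = ∫ u in (0:ℝ)..t, K u * H (t - u) := by rw [sub_self, sub_zero]

private lemma aux_conv_cont {K B H : ℝ → ℝ} {T : ℝ} (hT : 0 ≤ T)
    (hKm : Measurable K) (hB : Continuous B) (hB0 : ∀ u ∈ Set.Icc (0:ℝ) T, 0 ≤ B u)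
    (hKB : ∀ u ∈ Set.Icc (0:ℝ) T, |K u| ≤ B u) (hH : Continuous H) :
    ContinuousOn (fun t => ∫ s in (0:ℝ)..t, K (t - s) * H s) (Set.Icc 0 T) := by
  intro t₀ ht₀
  obtain ⟨M, hM⟩ := (isCompact_Icc (a := (0:ℝ)) (b := T)).exists_bound_of_continuousOn
    hH.continuousOn
  have hM0 : 0 ≤ M := le_trans (norm_nonneg _) (hM 0 (Set.left_mem_Icc.2 hT))
  have key : Filter.Tendsto
      (fun t => ∫ u in (0:ℝ)..T, Set.indicator {x | x ≤ t} (fun u => K u * H (t - u)) u)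
      (𝓝[Set.Icc (0:ℝ) T] t₀)
      (𝓝 (∫ u in (0:ℝ)..T, Set.indicator {x | x ≤ t₀} (fun u => K u * H (t₀ - u)) u)) := by
    apply intervalIntegral.tendsto_integral_filter_of_dominated_convergence
      (bound := fun u => B u * M)
    · refine Filter.Eventually.of_forall fun t => ?_
      have : Measurable fun u => K u * H (t - u) :=
        hKm.mul (hH.measurable.comp (measurable_const.sub measurable_id))
      exact (this.indicator measurableSet_Iic).aestronglyMeasurable
    · filter_upwards [self_mem_nhdsWithin] with t htIcc
      refine Filter.Eventually.of_forall fun u hu => ?_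
      rw [Set.uIoc_of_le hT] at hu
      by_cases hut : u ≤ t
      · simp only [Set.indicator_apply, Set.mem_setOf_eq, hut, if_true]
        have htu : t - u ∈ Set.Icc (0:ℝ) T := ⟨by linarith, by linarith [hu.1, htIcc.2]⟩
        calc ‖K u * H (t - u)‖ = |K u| * |H (t - u)| := abs_mul _ _
          _ ≤ B u * M := mul_le_mul (hKB u ⟨hu.1.le, hu.2⟩) (hM _ htu) (abs_nonneg _)
              (hB0 u ⟨hu.1.le, hu.2⟩)
      · simp only [Set.indicator_apply, Set.mem_setOf_eq, hut, if_false]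
        simpa using mul_nonneg (hB0 u ⟨hu.1.le, hu.2⟩) hM0
    · exact (hB.mul continuous_const).intervalIntegrable 0 T
    · have hne : ∀ᵐ u : ℝ, u ≠ t₀ := by
        rw [MeasureTheory.ae_iff]
        have : {u : ℝ | ¬ u ≠ t₀} = {t₀} := by ext u; simp
        rw [this]
        exact measure_singleton t₀
      filter_upwards [hne] with u hu _
      rcases hu.lt_or_gt with hlt | hgt
      · have hmem : u ∈ {x : ℝ | x ≤ t₀} := le_of_lt hlt
        rw [Set.indicator_of_mem hmem]
        have hbase : Filter.Tendsto (fun t => K u * H (t - u)) (𝓝[Set.Icc (0:ℝ) T] t₀)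
            (𝓝 (K u * H (t₀ - u))) := by
          have : Continuous fun t : ℝ => K u * H (t - u) :=
            continuous_const.mul (hH.comp (continuous_id.sub continuous_const))
          exact (this.tendsto t₀).mono_left nhdsWithin_le_nhds
        refine hbase.congr' ?_
        have hev : ∀ᶠ t in 𝓝[Set.Icc (0:ℝ) T] t₀, u < t :=
          (eventually_gt_nhds hlt).filter_mono nhdsWithin_le_nhds
        filter_upwards [hev] with t htu
        simp [Set.indicator_apply, le_of_lt htu]
      · have hmem : u ∉ {x : ℝ | x ≤ t₀} := not_le.2 hgt
        rw [Set.indicator_of_notMem hmem]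
        have hev : ∀ᶠ t in 𝓝[Set.Icc (0:ℝ) T] t₀, t < u :=
          (eventually_lt_nhds hgt).filter_mono nhdsWithin_le_nhds
        refine Filter.Tendsto.congr' ?_ tendsto_const_nhds
        filter_upwards [hev] with t htu
        simp [Set.indicator_apply, not_le.2 htu]
  have heq : ∀ᶠ t in 𝓝[Set.Icc (0:ℝ) T] t₀,
      (∫ u in (0:ℝ)..T, Set.indicator {x | x ≤ t} (fun u => K u * H (t - u)) u)
        = ∫ s in (0:ℝ)..t, K (t - s) * H s := by
    filter_upwards [self_mem_nhdsWithin] with t ht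
    exact (aux_rw ht).symm
  have h2 := key.congr' heq
  rw [← aux_rw ht₀] at h2
  exact h2

private lemma aux_tendsto {c T : ℝ} (hc : 0 ≤ c) (hT : 0 ≤ T) :
    Filter.Tendsto (fun ω : ℝ => ∫ u in (0:ℝ)..T, u ^ c * Real.exp (-(ω * u)))
      Filter.atTop (𝓝 0) := by
  have main := intervalIntegral.tendsto_integral_filter_of_dominated_convergence
    (μ := MeasureTheory.volume) (a := 0) (b := T) (f := fun _ : ℝ => (0:ℝ))
    (F := fun (ω : ℝ) (u : ℝ) => u ^ c * Real.exp (-(ω * u))) (l := Filter.atTop)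
    (bound := fun u => u ^ c) ?_ ?_ ?_ ?_
  · simpa using main
  · refine Filter.Eventually.of_forall fun ω => ?_
    have hcont : Continuous fun u : ℝ => u ^ c * Real.exp (-(ω * u)) := by
      have h1 : Continuous fun u : ℝ => -(ω * u) := (continuous_const.mul continuous_id).neg
      exact (aux_cont_rpow hc).mul (Real.continuous_exp.comp h1)
    exact hcont.aestronglyMeasurable.restrict
  · filter_upwards [Filter.eventually_ge_atTop (0:ℝ)] with ω hω
    refine Filter.Eventually.of_forall fun u hu => ?_
    rw [Set.uIoc_of_le hT] at hu
    have hu0 : 0 < u := hu.1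
    have h1 : ‖u ^ c * Real.exp (-(ω * u))‖ = u ^ c * Real.exp (-(ω * u)) := by
      rw [Real.norm_eq_abs, abs_of_nonneg (mul_nonneg (Real.rpow_nonneg hu0.le c) (Real.exp_pos _).le)]
    rw [h1]
    calc u ^ c * Real.exp (-(ω * u)) ≤ u ^ c * 1 := by
          refine mul_le_mul_of_nonneg_left ?_ (Real.rpow_nonneg hu0.le c)
          rw [Real.exp_le_one_iff]
          have : 0 ≤ ω * u := mul_nonneg hω hu0.le
          linarith
      _ = u ^ c := mul_one _
  · exact (aux_cont_rpow hc).intervalIntegrable 0 T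
  · refine Filter.Eventually.of_forall fun u hu => ?_
    rw [Set.uIoc_of_le hT] at hu
    have hu0 : 0 < u := hu.1
    have hexp : Filter.Tendsto (fun ω : ℝ => Real.exp (-(ω * u))) Filter.atTop (𝓝 0) := by
      apply Real.tendsto_exp_atBot.comp
      have h1 : Filter.Tendsto (fun ω : ℝ => ω * u) Filter.atTop Filter.atTop :=
        Filter.Tendsto.atTop_mul_const hu0 Filter.tendsto_id
      exact Filter.tendsto_neg_atBot_iff.mpr h1
    have := hexp.const_mul (u ^ c)
    simpa using this


private noncomputable def auxH (T ω : ℝ) (h0T : (0:ℝ) ≤ T) (f : ℝ → ℝ → ℝ)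
    (y : C(Set.Icc (0:ℝ) T, ℝ)) : ℝ → ℝ :=
  fun s => f (Set.projIcc 0 T h0T s : ℝ) (Real.exp (ω * s) * Set.IccExtend h0T y s)

private lemma auxH_cont {T ω : ℝ} (h0T : (0:ℝ) ≤ T) {f : ℝ → ℝ → ℝ}
    (hf_cont : ContinuousOn (fun p : ℝ × ℝ => f p.1 p.2) (Set.Icc 0 T ×ˢ Set.univ))
    (y : C(Set.Icc (0:ℝ) T, ℝ)) : Continuous (auxH T ω h0T f y) := by
  have h1 : Continuous fun s : ℝ => ((Set.projIcc 0 T h0T s : ℝ),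
      Real.exp (ω * s) * Set.IccExtend h0T y s) := by
    refine Continuous.prodMk ?_ ?_
    · exact continuous_subtype_val.comp continuous_projIcc
    · exact (Real.continuous_exp.comp (continuous_const.mul continuous_id)).mul
        y.continuous.Icc_extend'
  refine hf_cont.comp_continuous h1 fun s => ?_
  exact ⟨(Set.projIcc 0 T h0T s).2, Set.mem_univ _⟩

private lemma auxH_lip {T ω Lf : ℝ} (h0T : (0:ℝ) ≤ T) (hLf0 : 0 ≤ Lf) {f : ℝ → ℝ → ℝ}
    (hf_lip : ∀ t ∈ Set.Icc (0:ℝ) T, ∀ y z : ℝ, |f t y - f t z| ≤ Lf * |y - z|)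
    (y z : C(Set.Icc (0:ℝ) T, ℝ)) (s : ℝ) :
    |auxH T ω h0T f y s - auxH T ω h0T f z s| ≤ Lf * (Real.exp (ω * s) * dist y z) := by
  have h1 := hf_lip _ (Set.projIcc 0 T h0T s).2
    (Real.exp (ω * s) * Set.IccExtend h0T y s) (Real.exp (ω * s) * Set.IccExtend h0T z s)
  refine h1.trans ?_
  have h2 : |Set.IccExtend h0T ⇑y s - Set.IccExtend h0T ⇑z s| ≤ dist y z := by
    rw [← Real.dist_eq]
    exact ContinuousMap.dist_apply_le_dist _
  calc Lf * |Real.exp (ω*s) * Set.IccExtend h0T ⇑y s - Real.exp (ω*s) * Set.IccExtend h0T ⇑z s|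
      = Lf * (Real.exp (ω*s) * |Set.IccExtend h0T ⇑y s - Set.IccExtend h0T ⇑z s|) := by
        rw [← mul_sub, abs_mul, abs_of_pos (Real.exp_pos _)]
    _ ≤ Lf * (Real.exp (ω*s) * dist y z) :=
        mul_le_mul_of_nonneg_left (mul_le_mul_of_nonneg_left h2 (Real.exp_pos _).le) hLf0

private noncomputable def auxG (T ω : ℝ) (h0T : (0:ℝ) ≤ T) (f : ℝ → ℝ → ℝ) (K g : ℝ → ℝ)
    (y : C(Set.Icc (0:ℝ) T, ℝ)) : ℝ → ℝ :=
  fun t => Real.exp (-(ω * t)) * (g t + ∫ s in (0:ℝ)..t, K (t - s) * auxH T ω h0T f y s)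

private lemma auxG_contOn {T ω : ℝ} (h0T : (0:ℝ) ≤ T) {f : ℝ → ℝ → ℝ} {K B g : ℝ → ℝ}
    (hf_cont : ContinuousOn (fun p : ℝ × ℝ => f p.1 p.2) (Set.Icc 0 T ×ˢ Set.univ))
    (hKm : Measurable K) (hB : Continuous B) (hB0 : ∀ u ∈ Set.Icc (0:ℝ) T, 0 ≤ B u)
    (hKB : ∀ u ∈ Set.Icc (0:ℝ) T, |K u| ≤ B u) (hg : Continuous g)
    (y : C(Set.Icc (0:ℝ) T, ℝ)) :
    ContinuousOn (auxG T ω h0T f K g y) (Set.Icc 0 T) := by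
  unfold auxG
  refine ContinuousOn.mul ?_ ?_
  · exact (Real.continuous_exp.comp (continuous_const.mul continuous_id).neg).continuousOn
  · exact hg.continuousOn.add (aux_conv_cont h0T hKm hB hB0 hKB (auxH_cont h0T hf_cont y))

theorem existence_uniqueness (α β lam mu T Lf : ℝ)
    (hα1 : 1 < α) (hα2 : α < 2) (hβ0 : 0 < β) (hβ1 : β < 1) (hαβ : α - β > 1)
    (hT : 0 < T) (hLf : 0 < Lf)
    (f : ℝ → ℝ → ℝ)
    (hf_cont : ContinuousOn (fun p : ℝ × ℝ => f p.1 p.2)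
      (Set.Icc 0 T ×ˢ Set.univ))
    (hf_lip : ∀ t ∈ Set.Icc (0 : ℝ) T, ∀ y z : ℝ, |f t y - f t z| ≤ Lf * |y - z|)
    (K : ℝ → ℝ) (hK_meas : Measurable K)
    (hK : ∀ s ∈ Set.Icc (0 : ℝ) T,
      |K s| ≤ s ^ (α - 1) * Real.exp (|lam| * s ^ (α - β) + |mu| * s ^ α))
    (g : ℝ → ℝ) (hg : Continuous g) :
    ∃ y : ℝ → ℝ, ContinuousOn y (Set.Icc 0 T) ∧
      (∀ t ∈ Set.Icc (0 : ℝ) T,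
        y t = g t + ∫ s in (0 : ℝ)..t, K (t - s) * f s (y s)) ∧
      (∀ z : ℝ → ℝ, ContinuousOn z (Set.Icc 0 T) →
        (∀ t ∈ Set.Icc (0 : ℝ) T,
          z t = g t + ∫ s in (0 : ℝ)..t, K (t - s) * f s (z s)) →
        ∀ t ∈ Set.Icc (0 : ℝ) T, z t = y t) := by
  have h0T : (0:ℝ) ≤ T := hT.le
  have hα1' : (0:ℝ) ≤ α - 1 := by linarith
  -- the dominating kernel
  set B : ℝ → ℝ := fun u => u ^ (α - 1) * Real.exp (|lam| * u ^ (α - β) + |mu| * u ^ α)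
    with hBdef
  have hBcont : Continuous B := by
    refine (aux_cont_rpow hα1').mul (Real.continuous_exp.comp ?_)
    exact (continuous_const.mul (aux_cont_rpow (by linarith))).add
      (continuous_const.mul (aux_cont_rpow (by linarith)))
  have hB0 : ∀ u ∈ Set.Icc (0:ℝ) T, 0 ≤ B u := fun u hu =>
    mul_nonneg (Real.rpow_nonneg hu.1 _) (Real.exp_pos _).le
  set Cst : ℝ := |lam| * T ^ (α - β) + |mu| * T ^ α with hCst
  have hBC : ∀ u ∈ Set.Icc (0:ℝ) T, B u ≤ Real.exp Cst * u ^ (α - 1) := by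
    intro u hu
    have h1 : |lam| * u ^ (α - β) + |mu| * u ^ α ≤ Cst := by
      refine add_le_add ?_ ?_
      · exact mul_le_mul_of_nonneg_left (Real.rpow_le_rpow hu.1 hu.2 (by linarith)) (abs_nonneg _)
      · exact mul_le_mul_of_nonneg_left (Real.rpow_le_rpow hu.1 hu.2 (by linarith)) (abs_nonneg _)
    calc B u = u ^ (α - 1) * Real.exp (|lam| * u ^ (α - β) + |mu| * u ^ α) := rfl
      _ ≤ u ^ (α - 1) * Real.exp Cst :=
          mul_le_mul_of_nonneg_left (Real.exp_le_exp.2 h1) (Real.rpow_nonneg hu.1 _)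
      _ = Real.exp Cst * u ^ (α - 1) := mul_comm _ _
  -- choose the weight ω
  have htend : Filter.Tendsto
      (fun ω : ℝ => Lf * (Real.exp Cst * ∫ u in (0:ℝ)..T, u ^ (α-1) * Real.exp (-(ω * u))))
      Filter.atTop (𝓝 0) := by
    have h := aux_tendsto hα1' h0T
    have h2 := (h.const_mul (Real.exp Cst)).const_mul Lf
    simpa using h2
  obtain ⟨ω, hω1, hω0⟩ :=
    ((htend.eventually_lt_const one_pos).and (Filter.eventually_ge_atTop (0:ℝ))).exists
  set Iw : ℝ := ∫ u in (0:ℝ)..T, u ^ (α-1) * Real.exp (-(ω * u)) with hIw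
  have hIw0 : 0 ≤ Iw := by
    refine intervalIntegral.integral_nonneg h0T fun u hu => ?_
    exact mul_nonneg (Real.rpow_nonneg hu.1 _) (Real.exp_pos _).le
  have hcnn : 0 ≤ Lf * (Real.exp Cst * Iw) :=
    mul_nonneg hLf.le (mul_nonneg (Real.exp_pos _).le hIw0)
  set c : NNReal := (Lf * (Real.exp Cst * Iw)).toNNReal with hcdef
  have hcc : (c : ℝ) = Lf * (Real.exp Cst * Iw) := Real.coe_toNNReal _ hcnn
  have hc1 : c < 1 := by
    rw [← NNReal.coe_lt_coe, NNReal.coe_one, hcc]; exact hω1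
  -- the operator
  set G : C(Set.Icc (0:ℝ) T, ℝ) → C(Set.Icc (0:ℝ) T, ℝ) := fun y =>
    ⟨fun t => auxG T ω h0T f K g y ↑t,
      (auxG_contOn h0T hf_cont hK_meas hBcont hB0 hK hg y).restrict⟩ with hGdef
  have hint : ∀ (y : C(Set.Icc (0:ℝ) T, ℝ)) (t : ℝ), t ∈ Set.Icc (0:ℝ) T →
      IntervalIntegrable (fun s => K (t - s) * auxH T ω h0T f y s) MeasureTheory.volume 0 t :=
    fun y t ht => aux_integrable ht.1 ht.2 hK_meas hBcont hK (auxH_cont h0T hf_cont y)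
  -- contraction estimate
  have hGlip : ∀ y z, dist (G y) (G z) ≤ (c:ℝ) * dist y z := by
    intro y z
    rw [ContinuousMap.dist_le (mul_nonneg c.coe_nonneg dist_nonneg)]
    rintro ⟨tr, htr⟩
    set D := dist y z with hD
    have hD0 : 0 ≤ D := dist_nonneg
    have ht1 : 0 ≤ tr := htr.1
    have ht2 : tr ≤ T := htr.2
    have hsub : (∫ s in (0:ℝ)..tr, (K (tr - s) * auxH T ω h0T f y s
          - K (tr - s) * auxH T ω h0T f z s))
        = (∫ s in (0:ℝ)..tr, K (tr - s) * auxH T ω h0T f y s)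
          - ∫ s in (0:ℝ)..tr, K (tr - s) * auxH T ω h0T f z s :=
      intervalIntegral.integral_sub (hint y tr htr) (hint z tr htr)
    have step1 : auxG T ω h0T f K g y tr - auxG T ω h0T f K g z tr
        = Real.exp (-(ω*tr)) * ∫ s in (0:ℝ)..tr,
            (K (tr - s) * auxH T ω h0T f y s - K (tr - s) * auxH T ω h0T f z s) := by
      rw [hsub]; simp only [auxG]; ring
    have step4 : (∫ s in (0:ℝ)..tr, |K (tr - s) * auxH T ω h0T f y s
          - K (tr - s) * auxH T ω h0T f z s|)
        ≤ ∫ s in (0:ℝ)..tr, (Real.exp Cst * (tr - s) ^ (α-1)) * (Lf * (Real.exp (ω*s) * D)) := by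
      have hRHScont : Continuous fun s : ℝ =>
          (Real.exp Cst * (tr - s) ^ (α-1)) * (Lf * (Real.exp (ω*s) * D)) := by
        have h1 : Continuous fun s : ℝ => (tr - s) ^ (α-1) :=
          (aux_cont_rpow hα1').comp (continuous_const.sub continuous_id)
        have h2 : Continuous fun s : ℝ => Real.exp (ω*s) :=
          Real.continuous_exp.comp (continuous_const.mul continuous_id)
        exact (continuous_const.mul h1).mul (continuous_const.mul (h2.mul continuous_const))
      refine intervalIntegral.integral_mono_on ht1 ((hint y tr htr).sub (hint z tr htr)).abs
        (hRHScont.intervalIntegrable 0 tr) ?_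
      intro s hs
      have hmem : tr - s ∈ Set.Icc (0:ℝ) T := ⟨by linarith [hs.2], by linarith [hs.1]⟩
      rw [← mul_sub, abs_mul]
      refine mul_le_mul ((hK _ hmem).trans (hBC _ hmem)) (auxH_lip h0T hLf.le hf_lip y z s)
        (abs_nonneg _) (mul_nonneg (Real.exp_pos _).le (Real.rpow_nonneg hmem.1 _))
    have step5 : Real.exp (-(ω*tr)) * ∫ s in (0:ℝ)..tr,
          (Real.exp Cst * (tr - s) ^ (α-1)) * (Lf * (Real.exp (ω*s) * D))
        = (Lf * Real.exp Cst * D) * ∫ s in (0:ℝ)..tr,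
            ((tr - s) ^ (α-1) * Real.exp (-(ω*(tr - s)))) := by
      rw [← intervalIntegral.integral_const_mul, ← intervalIntegral.integral_const_mul]
      refine intervalIntegral.integral_congr fun s _ => ?_
      have hexp : Real.exp (-(ω*(tr - s))) = Real.exp (-(ω*tr)) * Real.exp (ω*s) := by
        rw [← Real.exp_add]; congr 1; ring
      rw [hexp]; ring
    have step6 := intervalIntegral.integral_comp_sub_left
      (a := 0) (b := tr) (fun u => u ^ (α-1) * Real.exp (-(ω*u))) tr
    rw [sub_self, sub_zero] at step6
    have step7 : (∫ u in (0:ℝ)..tr, u ^ (α-1) * Real.exp (-(ω*u))) ≤ Iw := by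
      refine intervalIntegral.integral_mono_interval le_rfl ht1 ht2 ?_ ?_
      · refine (MeasureTheory.ae_restrict_iff' measurableSet_Ioc).2
          (Filter.Eventually.of_forall fun u hu => ?_)
        exact mul_nonneg (Real.rpow_nonneg hu.1.le _) (Real.exp_pos _).le
      · have h1 : Continuous fun u : ℝ => -(ω * u) := (continuous_const.mul continuous_id).neg
        exact ((aux_cont_rpow hα1').mul (Real.continuous_exp.comp h1)).intervalIntegrable 0 T
    have hconst : 0 ≤ Lf * Real.exp Cst * D :=
      mul_nonneg (mul_nonneg hLf.le (Real.exp_pos _).le) hD0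
    calc dist (G y ⟨tr, htr⟩) (G z ⟨tr, htr⟩)
        = |auxG T ω h0T f K g y tr - auxG T ω h0T f K g z tr| := Real.dist_eq _ _
      _ = Real.exp (-(ω*tr)) * |∫ s in (0:ℝ)..tr,
            (K (tr - s) * auxH T ω h0T f y s - K (tr - s) * auxH T ω h0T f z s)| := by
          rw [step1, abs_mul, abs_of_pos (Real.exp_pos _)]
      _ ≤ Real.exp (-(ω*tr)) * ∫ s in (0:ℝ)..tr, |K (tr - s) * auxH T ω h0T f y s
            - K (tr - s) * auxH T ω h0T f z s| :=
          mul_le_mul_of_nonneg_left (intervalIntegral.abs_integral_le_integral_abs ht1)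
            (Real.exp_pos _).le
      _ ≤ Real.exp (-(ω*tr)) * ∫ s in (0:ℝ)..tr,
            (Real.exp Cst * (tr - s) ^ (α-1)) * (Lf * (Real.exp (ω*s) * D)) :=
          mul_le_mul_of_nonneg_left step4 (Real.exp_pos _).le
      _ = (Lf * Real.exp Cst * D) * ∫ s in (0:ℝ)..tr,
            ((tr - s) ^ (α-1) * Real.exp (-(ω*(tr - s)))) := step5
      _ = (Lf * Real.exp Cst * D) * ∫ u in (0:ℝ)..tr, u ^ (α-1) * Real.exp (-(ω*u)) := by
          rw [step6]
      _ ≤ (Lf * Real.exp Cst * D) * Iw := mul_le_mul_of_nonneg_left step7 hconst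
      _ = (c:ℝ) * D := by rw [hcc]; ring
  have hG : ContractingWith c G := ⟨hc1, LipschitzWith.of_dist_le_mul hGlip⟩
  set x : C(Set.Icc (0:ℝ) T, ℝ) := ContractingWith.fixedPoint G hG with hxdef
  have hx : Function.IsFixedPt G x := hG.fixedPoint_isFixedPt
  refine ⟨fun t => Real.exp (ω*t) * Set.IccExtend h0T (⇑x) t, ?_, ?_, ?_⟩
  · exact ((Real.continuous_exp.comp (continuous_const.mul continuous_id)).mul
      x.continuous.Icc_extend').continuousOn
  · intro t ht
    have hxt : Set.IccExtend h0T ⇑x t = x ⟨t, ht⟩ := Set.IccExtend_of_mem h0T _ ht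
    have hfix : x ⟨t, ht⟩ = auxG T ω h0T f K g x t := by
      conv_lhs => rw [← hx]
      rfl
    have hicongr : (∫ s in (0:ℝ)..t, K (t - s) * auxH T ω h0T f x s)
        = ∫ s in (0:ℝ)..t, K (t - s) * f s (Real.exp (ω*s) * Set.IccExtend h0T ⇑x s) := by
      refine intervalIntegral.integral_congr fun s hs => ?_
      rw [Set.uIcc_of_le ht.1] at hs
      have hsT : s ∈ Set.Icc (0:ℝ) T := ⟨hs.1, hs.2.trans ht.2⟩
      congr 1
      simp [auxH, Set.projIcc_of_mem h0T hsT]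
    show Real.exp (ω*t) * Set.IccExtend h0T ⇑x t
        = g t + ∫ s in (0:ℝ)..t, K (t - s) * f s (Real.exp (ω*s) * Set.IccExtend h0T ⇑x s)
    rw [hxt, hfix]
    simp only [auxG]
    rw [← mul_assoc, ← Real.exp_add, ← hicongr]
    simp
  · intro z hz_cont hz_eq
    have hζcont : Continuous fun t : Set.Icc (0:ℝ) T => Real.exp (-(ω*(t:ℝ))) * z ↑t := by
      refine Continuous.mul ?_ hz_cont.restrict
      exact Real.continuous_exp.comp (continuous_const.mul continuous_subtype_val).neg
    set ζ : C(Set.Icc (0:ℝ) T, ℝ) := ⟨_, hζcont⟩ with hζdef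
    have hζfix : Function.IsFixedPt G ζ := by
      refine ContinuousMap.ext ?_
      rintro ⟨tr, htr⟩
      show auxG T ω h0T f K g ζ tr = Real.exp (-(ω*tr)) * z tr
      have hicongr : (∫ s in (0:ℝ)..tr, K (tr - s) * auxH T ω h0T f ζ s)
          = ∫ s in (0:ℝ)..tr, K (tr - s) * f s (z s) := by
        refine intervalIntegral.integral_congr fun s hs => ?_
        rw [Set.uIcc_of_le htr.1] at hs
        have hsT : s ∈ Set.Icc (0:ℝ) T := ⟨hs.1, hs.2.trans htr.2⟩
        congr 1
        simp only [auxH]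
        rw [Set.IccExtend_of_mem h0T _ hsT, Set.projIcc_of_mem h0T hsT]
        show f s (Real.exp (ω*s) * (Real.exp (-(ω*s)) * z s)) = f s (z s)
        rw [← mul_assoc, ← Real.exp_add]
        simp
      simp only [auxG]
      rw [hicongr, ← hz_eq tr htr]
    have hζx : ζ = x := hG.fixedPoint_unique hζfix
    intro t ht
    show z t = Real.exp (ω*t) * Set.IccExtend h0T (⇑x) t
    rw [Set.IccExtend_of_mem h0T _ ht, ← hζx]
    show z t = Real.exp (ω*t) * (Real.exp (-(ω*t)) * z t)
    rw [← mul_assoc, ← Real.exp_add]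
    simp
end
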